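/- The causal relation of (n+1)-dimensional Minkowski space is the intersection of countably many total preorders induced by null linear functionals with rational spatial directions: for x, y ∈ ℝ^{n+1} (n ≥ 1), one has y − x ∈ J⁺ (i.e. (y₀−x₀)² ≥ Σ_{i≥1}(y_i−x_i)² and y₀ ≥ x₀) if and only if ⟨e₀ + v, y − x⟩ ≥ 0 for every unit vector v ∈ ℚⁿ with |v| = 1, where ⟨e₀+v, z⟩ := z₀ + Σ_{i≥1} v_i z_i. -/

import Mathlib

open scoped RealInnerProductSpace

/-- Rational points are dense in Euclidean space. -/
lemma minkowski_aux_rat_dense (n : ℕ) (b : EuclideanSpace ℝ (Fin n)) {δ : ℝ} (hδ : 0 < δ) :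
    ∃ a : EuclideanSpace ℝ (Fin n), (∀ i, ∃ q : ℚ, a i = (q : ℝ)) ∧ ‖a - b‖ < δ := by
  have hδ' : 0 < δ / (n + 1) := by positivity
  choose q hq using fun i : Fin n => exists_rat_near (b i) hδ'
  set a : EuclideanSpace ℝ (Fin n) := WithLp.toLp 2 (fun i => (q i : ℝ)) with ha
  refine ⟨a, fun i => ⟨q i, rfl⟩, ?_⟩
  rw [EuclideanSpace.norm_eq]
  refine (Real.sqrt_lt' hδ).mpr ?_
  have hterm : ∀ i : Fin n, ‖(a - b) i‖ ^ 2 ≤ (δ / (n + 1)) ^ 2 := by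
    intro i
    have h1 : ‖(a - b) i‖ ≤ δ / (n + 1) := by
      have := hq i
      rw [abs_sub_comm] at this
      simpa [ha, Real.norm_eq_abs, PiLp.sub_apply] using this.le
    exact pow_le_pow_left₀ (norm_nonneg _) h1 2
  calc ∑ i, ‖(a - b) i‖ ^ 2
      ≤ ∑ _i : Fin n, (δ / (n + 1)) ^ 2 := Finset.sum_le_sum fun i _ => hterm i
    _ = (n : ℝ) * (δ / (n + 1)) ^ 2 := by simp [mul_comm]
    _ < δ ^ 2 := by
        rw [div_pow]
        have h1 : (0 : ℝ) < ((n : ℝ) + 1) ^ 2 := by positivity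
        have h2 : (n : ℝ) < ((n : ℝ) + 1) ^ 2 := by nlinarith [Nat.cast_nonneg (α := ℝ) n]
        calc (n : ℝ) * (δ ^ 2 / ((n : ℝ) + 1) ^ 2) = δ ^ 2 * ((n : ℝ) / ((n : ℝ) + 1) ^ 2) := by
              ring
          _ < δ ^ 2 * 1 := by
              apply mul_lt_mul_of_pos_left _ (by positivity)
              rw [div_lt_one h1]; exact h2
          _ = δ ^ 2 := mul_one _

/-- Rational unit vectors are dense in the unit sphere (n ≥ 1). -/
lemma minkowski_aux_rat_sphere_dense (n : ℕ) (hn : 1 ≤ n) (u : EuclideanSpace ℝ (Fin n))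
    (hu : ‖u‖ = 1) {ε : ℝ} (hε : 0 < ε) :
    ∃ v : EuclideanSpace ℝ (Fin n), (∀ i, ∃ q : ℚ, v i = (q : ℝ)) ∧ ‖v‖ = 1 ∧ ‖v - u‖ < ε := by
  set i0 : Fin n := ⟨0, hn⟩ with hi0
  set e : EuclideanSpace ℝ (Fin n) := EuclideanSpace.single i0 1 with he_def
  have he_norm : ‖e‖ = 1 := by simp [he_def, EuclideanSpace.norm_single]
  have he_rat : ∀ i, ∃ q : ℚ, e i = (q : ℝ) := by
    intro i
    refine ⟨if i = i0 then 1 else 0, ?_⟩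
    simp [he_def, EuclideanSpace.single_apply]
    split <;> simp
  by_cases hue : u = e
  · exact ⟨e, he_rat, he_norm, by simp [hue, hε]⟩
  · have ha0 : e - u ≠ 0 := sub_ne_zero.mpr (Ne.symm hue)
    set a₀ : EuclideanSpace ℝ (Fin n) := e - u with ha0def
    have hia0 : ⟪a₀, a₀⟫ ≠ 0 := inner_self_ne_zero.mpr ha0
    set f : EuclideanSpace ℝ (Fin n) → EuclideanSpace ℝ (Fin n) :=
      fun a => e - (2 * ⟪e, a⟫ / ⟪a, a⟫) • a with hf_def
    -- f a₀ = u
    have hinner_a₀ : ⟪a₀, a₀⟫ = 2 * ⟪e, a₀⟫ := by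
      have h1 : ⟪a₀, a₀⟫ = ‖a₀‖ ^ 2 := real_inner_self_eq_norm_sq a₀
      have h2 : ‖e - u‖ ^ 2 = ‖e‖ ^ 2 - 2 * ⟪e, u⟫ + ‖u‖ ^ 2 := norm_sub_sq_real e u
      have h3 : ⟪e, a₀⟫ = ⟪e, e⟫ - ⟪e, u⟫ := inner_sub_right e e u
      have h4 : ⟪e, e⟫ = ‖e‖ ^ 2 := real_inner_self_eq_norm_sq e
      rw [h1, ha0def, h2, h3, h4, he_norm, hu]; ring
    have hfa₀ : f a₀ = u := by
      have hco : 2 * ⟪e, a₀⟫ / ⟪a₀, a₀⟫ = 1 := by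
        rw [hinner_a₀] at hia0 ⊢
        exact div_self hia0
      rw [hf_def]
      simp only [hco, one_smul]
      rw [ha0def]
      abel
    -- continuity of f at a₀
    have hcont : ContinuousAt f a₀ := by
      apply ContinuousAt.sub continuousAt_const
      apply ContinuousAt.smul (f := fun a => 2 * ⟪e, a⟫ / ⟪a, a⟫) (g := id) _ continuousAt_id
      apply ContinuousAt.div
      · exact (continuous_const.mul (continuous_const.inner continuous_id)).continuousAt
      · exact (continuous_id.inner continuous_id).continuousAt
      · exact hia0
    rw [Metric.continuousAt_iff] at hcont
    obtain ⟨δ, hδpos, hδ⟩ := hcont ε hε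
    have hna0 : 0 < ‖a₀‖ := norm_pos_iff.mpr ha0
    have hδ'pos : 0 < min δ ‖a₀‖ := lt_min hδpos hna0
    obtain ⟨a, ha_rat, ha_near⟩ := minkowski_aux_rat_dense n a₀ hδ'pos
    have ha_ne : a ≠ 0 := by
      intro h0
      rw [h0, zero_sub, norm_neg] at ha_near
      exact absurd (lt_of_lt_of_le ha_near (min_le_right _ _)) (lt_irrefl _)
    have hia : ⟪a, a⟫ ≠ 0 := inner_self_ne_zero.mpr ha_ne
    refine ⟨f a, ?_, ?_, ?_⟩
    · -- rationality
      intro i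
      choose qa hqa using ha_rat
      have hinner_ea : ⟪e, a⟫ = (qa i0 : ℝ) := by
        rw [he_def, EuclideanSpace.inner_single_left]
        simp [hqa i0]
      have hinner_aa : ⟪a, a⟫ = ((∑ j, qa j * qa j : ℚ) : ℝ) := by
        rw [PiLp.inner_apply]
        push_cast
        exact Finset.sum_congr rfl fun j _ => by simp [hqa j]; rw [← Rat.norm_cast_real, Real.norm_eq_abs, sq_abs, sq]
      obtain ⟨qe, hqe⟩ := he_rat i
      refine ⟨qe - 2 * qa i0 / (∑ j, qa j * qa j) * qa i, ?_⟩
      rw [hf_def]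
      simp only [PiLp.sub_apply, PiLp.smul_apply, smul_eq_mul]
      rw [hqe, hinner_ea, hinner_aa, hqa i]
      push_cast
      ring
    · -- unit norm
      have hsq : ⟪f a, f a⟫ = 1 := by
        show ⟪e - (2 * ⟪e, a⟫ / ⟪a, a⟫) • a, e - (2 * ⟪e, a⟫ / ⟪a, a⟫) • a⟫ = 1
        have hcomm : ⟪a, e⟫ = ⟪e, a⟫ := real_inner_comm e a
        set c : ℝ := 2 * ⟪e, a⟫ / ⟪a, a⟫ with hc
        have hcp : c * ⟪a, a⟫ = 2 * ⟪e, a⟫ := by rw [hc]; exact div_mul_cancel₀ _ hia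
        clear_value c
        simp only [inner_sub_left, inner_sub_right, real_inner_smul_left, real_inner_smul_right]
        rw [real_inner_self_eq_norm_sq e, he_norm, hcomm]
        linear_combination c * hcp
      have hsq' : ‖f a‖ ^ 2 = 1 := by rw [← real_inner_self_eq_norm_sq]; exact hsq
      rw [← Real.sqrt_sq (norm_nonneg (f a)), hsq', Real.sqrt_one]
    · -- closeness
      have := hδ (show dist a a₀ < δ by
        rw [dist_eq_norm]; exact lt_of_lt_of_le ha_near (min_le_left _ _))
      rw [dist_eq_norm, hfa₀] at this
      exact this

theorem minkowski_causal_iff_null_functionals (n : ℕ) (hn : 1 ≤ n)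
    (x y : ℝ × EuclideanSpace ℝ (Fin n)) :
    ‖y.2 - x.2‖ ≤ y.1 - x.1 ↔
      ∀ v : EuclideanSpace ℝ (Fin n), (∀ i, ∃ q : ℚ, v i = (q : ℝ)) → ‖v‖ = 1 →
        0 ≤ (y.1 - x.1) + ⟪v, y.2 - x.2⟫ := by
  set w : EuclideanSpace ℝ (Fin n) := y.2 - x.2 with hw
  set t : ℝ := y.1 - x.1 with ht
  constructor
  · intro h v _ hv1
    have h1 : |⟪v, w⟫| ≤ ‖v‖ * ‖w‖ := abs_real_inner_le_norm v w
    rw [hv1, one_mul] at h1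
    have h2 : -⟪v, w⟫ ≤ |⟪v, w⟫| := neg_le_abs _
    linarith
  · intro h
    have key : ∀ ε : ℝ, 0 < ε → ‖w‖ < t + ε := by
      intro ε hε
      by_cases hw0 : w = 0
      · have := h (EuclideanSpace.single ⟨0, hn⟩ 1)
          (fun i => ⟨if i = (⟨0, hn⟩ : Fin n) then 1 else 0, by
            simp [EuclideanSpace.single_apply]; split <;> simp⟩)
          (by simp [EuclideanSpace.norm_single])
        rw [hw0] at this ⊢
        simp only [inner_zero_right, add_zero] at this
        simpa using lt_of_le_of_lt this (by linarith)
      · have hnw : 0 < ‖w‖ := norm_pos_iff.mpr hw0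
        set u : EuclideanSpace ℝ (Fin n) := -(‖w‖⁻¹ • w) with hu_def
        have hu_norm : ‖u‖ = 1 := by
          rw [hu_def, norm_neg, norm_smul, norm_inv, norm_norm]
          field_simp
        have hu_inner : ⟪u, w⟫ = -‖w‖ := by
          rw [hu_def, inner_neg_left, real_inner_smul_left,
            real_inner_self_eq_norm_sq]
          field_simp
        have hε' : 0 < ε / (‖w‖ + 1) := by positivity
        obtain ⟨v, hv_rat, hv_norm, hv_near⟩ :=
          minkowski_aux_rat_sphere_dense n hn u hu_norm hε'
        have hvw : ⟪v, w⟫ < -‖w‖ + ε := by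
          have h1 : ⟪v, w⟫ = ⟪u, w⟫ + ⟪v - u, w⟫ := by
            rw [inner_sub_left]; ring
          have h2 : ⟪v - u, w⟫ ≤ ‖v - u‖ * ‖w‖ := real_inner_le_norm _ _
          have h3 : ‖v - u‖ * ‖w‖ < ε := by
            calc ‖v - u‖ * ‖w‖ ≤ (ε / (‖w‖ + 1)) * ‖w‖ :=
                  mul_le_mul_of_nonneg_right hv_near.le (norm_nonneg w)
              _ < ε := by
                  rw [div_mul_eq_mul_div, div_lt_iff₀ (by positivity)]
                  nlinarith
          rw [h1, hu_inner]
          linarith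
        have := h v hv_rat hv_norm
        linarith
    by_contra hcon
    push_neg at hcon
    have := key ((‖w‖ - t) / 2) (by linarith)
    linarith
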